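/- arXiv:2105.00922 — 4 statements merged into one kernel-verified Lean document; each statement's English description precedes it below -/
import Mathlib

section
/- Let R₊, T ∈ ℂ with |R₊|² + |T|² = 1, and let W₊, W₋ ∈ ℂ. Define, for η ∈ ℝ, R⁰(η) = R₊ - 2i·W₊²/(4η + i(|W₊|² + |W₋|²)) and T⁰(η) = T - 2i·W₊·W₋/(4η + i(|W₊|² + |W₋|²)). If W₊ = conj(W₊)·R₊ + conj(W₋)·T and W₋ = conj(W₊)·T + conj(W₋)·R₋ where R₋ ∈ ℂ satisfies conj(R₊)·T + conj(T)·R₋ = 0 and |R₋|² + |T|² = 1, then for every η ∈ ℝ, |R⁰(η)|² + |T⁰(η)|² = 1. -/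
theorem stmt_2 (Rp Rm T Wp Wm : ℂ)
    (h1 : ‖Rp‖ ^ 2 + ‖T‖ ^ 2 = 1)
    (h2 : ‖Rm‖ ^ 2 + ‖T‖ ^ 2 = 1)
    (hRel : (starRingEnd ℂ) Rp * T + (starRingEnd ℂ) T * Rm = 0)
    (hWp : Wp = (starRingEnd ℂ) Wp * Rp + (starRingEnd ℂ) Wm * T)
    (hWm : Wm = (starRingEnd ℂ) Wp * T + (starRingEnd ℂ) Wm * Rm) :
    ∀ η : ℝ,
      ‖Rp - 2 * Complex.I * Wp ^ 2 /
        ((4 * η : ℂ) + Complex.I * ((‖Wp‖ ^ 2 + ‖Wm‖ ^ 2 : ℝ) : ℂ))‖ ^ 2 +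
      ‖T - 2 * Complex.I * Wp * Wm /
        ((4 * η : ℂ) + Complex.I * ((‖Wp‖ ^ 2 + ‖Wm‖ ^ 2 : ℝ) : ℂ))‖ ^ 2 = 1 := by
  intro η
  by_cases hWp0 : Wp = 0
  · simpa [hWp0] using h1
  have habs : 0 < ‖Wp‖ := norm_pos_iff.mpr hWp0
  have hd : ((4 * η : ℂ) + Complex.I * ((‖Wp‖ ^ 2 + ‖Wm‖ ^ 2 : ℝ) : ℂ)) ≠ 0 := by
    intro h
    have him := congrArg Complex.im h
    simp [Complex.add_im, Complex.mul_im, Complex.I_re, Complex.I_im,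
      Complex.ofReal_re, Complex.ofReal_im, ← Complex.ofReal_pow] at him
    nlinarith [norm_nonneg Wm]
  set d : ℂ := (4 * η : ℂ) + Complex.I * ((‖Wp‖ ^ 2 + ‖Wm‖ ^ 2 : ℝ) : ℂ) with hd_def
  have hd' : (starRingEnd ℂ) d ≠ 0 := fun h => hd (by simpa using congrArg (starRingEnd ℂ) h)
  have h1' : Rp * (starRingEnd ℂ) Rp + T * (starRingEnd ℂ) T = 1 := by
    rw [Complex.mul_conj, Complex.mul_conj]
    norm_cast
    simpa [Complex.sq_norm] using h1
  have hWp' : (starRingEnd ℂ) Wp = Wp * (starRingEnd ℂ) Rp + Wm * (starRingEnd ℂ) T := by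
    simpa [map_add, map_mul, mul_comm] using congrArg (starRingEnd ℂ) hWp
  have hS : ((‖Wp‖ ^ 2 + ‖Wm‖ ^ 2 : ℝ) : ℂ)
      = Wp * (starRingEnd ℂ) Wp + Wm * (starRingEnd ℂ) Wm := by
    rw [Complex.mul_conj, Complex.mul_conj, ← Complex.ofReal_add]
    norm_cast
    simp [Complex.sq_norm]
  have key : (Rp - 2 * Complex.I * Wp ^ 2 / d) * (starRingEnd ℂ) (Rp - 2 * Complex.I * Wp ^ 2 / d)
      + (T - 2 * Complex.I * Wp * Wm / d) * (starRingEnd ℂ) (T - 2 * Complex.I * Wp * Wm / d)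
      = 1 := by
    have e1 : Rp - 2 * Complex.I * Wp ^ 2 / d = (Rp * d - 2 * Complex.I * Wp ^ 2) / d := by
      rw [sub_div, mul_div_cancel_right₀ _ hd]
    have e2 : T - 2 * Complex.I * Wp * Wm / d = (T * d - 2 * Complex.I * Wp * Wm) / d := by
      rw [sub_div, mul_div_cancel_right₀ _ hd]
    rw [e1, e2, map_div₀, map_div₀, div_mul_div_comm, div_mul_div_comm, ← add_div,
      div_eq_one_iff_eq (mul_ne_zero hd hd')]
    simp only [hd_def, hS, map_sub, map_add, map_mul, map_pow, Complex.conj_I, map_ofNat,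
      Complex.conj_conj, Complex.conj_ofReal]
    linear_combination
      ((4 * (η:ℂ) + Complex.I * (Wp * (starRingEnd ℂ) Wp + Wm * (starRingEnd ℂ) Wm)) *
        (4 * (η:ℂ) - Complex.I * (Wp * (starRingEnd ℂ) Wp + Wm * (starRingEnd ℂ) Wm))) * h1'
      - (2 * Complex.I * (4 * (η:ℂ) + Complex.I * (Wp * (starRingEnd ℂ) Wp + Wm * (starRingEnd ℂ) Wm)) * (starRingEnd ℂ) Wp) * hWp
      + (2 * Complex.I * (4 * (η:ℂ) - Complex.I * (Wp * (starRingEnd ℂ) Wp + Wm * (starRingEnd ℂ) Wm)) * Wp) * hWp'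
  rw [Complex.sq_norm, Complex.sq_norm]
  rw [Complex.mul_conj, Complex.mul_conj] at key
  exact_mod_cast key
end

section
/- Let W₊ ∈ ℂ with W₊ ≠ 0 and R₊ ∈ ℂ with R₊ ≠ 0, and W₋ ∈ ℂ. There exists η ∈ ℝ such that R₊ - 2i·W₊²/(4η + i(|W₊|² + |W₋|²)) = 0 if and only if |W₊|² + |W₋|² = 2·Re(W₊²/R₊). -/
theorem stmt_3 (Rp Wp Wm : ℂ) (hWp : Wp ≠ 0) (hRp : Rp ≠ 0) :
    (∃ η : ℝ, Rp - 2 * Complex.I * Wp ^ 2 /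
        ((4 * η : ℂ) + Complex.I * ((‖Wp‖ ^ 2 + ‖Wm‖ ^ 2 : ℝ) : ℂ)) = 0) ↔
    ‖Wp‖ ^ 2 + ‖Wm‖ ^ 2 = 2 * (Wp ^ 2 / Rp).re := by
  have hWp2 : Wp ^ 2 ≠ 0 := pow_ne_zero _ hWp
  set z : ℂ := Wp ^ 2 / Rp with hz
  have hzne : z ≠ 0 := div_ne_zero hWp2 hRp
  set A : ℝ := ‖Wp‖ ^ 2 + ‖Wm‖ ^ 2 with hA
  have hApos : 0 < A := by
    have h1 : 0 < ‖Wp‖ := norm_pos_iff.mpr hWp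
    have h2 : (0:ℝ) ≤ ‖Wm‖ ^ 2 := sq_nonneg _
    nlinarith
  have him : ∀ x : ℝ, ((4 * x : ℂ) + Complex.I * (A : ℂ)).im = A := by
    intro x
    simp only [Complex.add_im, Complex.mul_im, Complex.mul_re, Complex.I_re,
      Complex.I_im, Complex.ofReal_re, Complex.ofReal_im, Complex.re_ofNat,
      Complex.im_ofNat]
    ring
  constructor
  · rintro ⟨η, hη⟩
    set D : ℂ := (4 * η : ℂ) + Complex.I * (A : ℂ) with hD
    have hDne : D ≠ 0 := by
      intro h
      have h2 := congrArg Complex.im h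
      rw [hD] at h2
      rw [him η] at h2
      simp at h2
      linarith
    rw [sub_eq_zero, eq_div_iff hDne] at hη
    rw [hD] at hη
    have hDeq : (4 * (η:ℂ)) + Complex.I * (A : ℂ) = 2 * Complex.I * z := by
      rw [hz]
      field_simp
      linear_combination hη
    have h3 := congrArg Complex.im hDeq
    rw [him η] at h3
    have h4 : (2 * Complex.I * z).im = 2 * z.re := by
      simp [Complex.mul_im, Complex.mul_re]
    rw [h4] at h3
    exact h3
  · intro h
    refine ⟨-(z.im) / 2, ?_⟩
    have hDeq : ((4 * ((-(z.im) / 2 : ℝ) : ℂ)) : ℂ) + Complex.I * (A : ℂ) = 2 * Complex.I * z := by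
      apply Complex.ext
      · simp only [Complex.add_re, Complex.mul_re, Complex.mul_im, Complex.I_re,
          Complex.I_im, Complex.ofReal_re, Complex.ofReal_im, Complex.re_ofNat,
          Complex.im_ofNat]
        ring
      · rw [him]
        simp only [Complex.mul_im, Complex.mul_re, Complex.I_re, Complex.I_im,
          Complex.re_ofNat, Complex.im_ofNat]
        rw [h]
        ring
    rw [hDeq, sub_eq_zero, hz]
    have h2ine : 2 * Complex.I * z ≠ 0 := by
      simp [hzne, Complex.I_ne_zero]
    rw [eq_div_iff h2ine, hz]
    field_simp
end

section
/- For θ₁ ∈ (π/2, 3π/2) with θ₁ ≠ π, set R = -cos(θ₁)e^{iθ₁}, T = 1 + R, and p such that e^{2iωp} = e^{-2iθ₁}. Then (1 + R·e^{2iωp})/(e^{2iωp} + R·e^{2iωp}) = -1, and consequently T + R = 1 - 2cos(θ₁)e^{iθ₁} = e^{i(2θ₁ - π)}. -/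
theorem stmt_10 (θ₁ ω p : ℝ) (hθ : θ₁ ∈ Set.Ioo (Real.pi/2) (3*Real.pi/2))
    (hθπ : θ₁ ≠ Real.pi) (hω : 0 < ω)
    (R T : ℂ) (hR : R = -(Real.cos θ₁ : ℂ) * Complex.exp (Complex.I * θ₁))
    (hT : T = 1 + R)
    (hp : Complex.exp (2 * Complex.I * ω * p) = Complex.exp (-(2 * Complex.I * θ₁))) :
    (1 + R * Complex.exp (2 * Complex.I * ω * p)) /
      (Complex.exp (2 * Complex.I * ω * p) + R * Complex.exp (2 * Complex.I * ω * p)) = -1 ∧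
    T + R = 1 - 2 * (Real.cos θ₁ : ℂ) * Complex.exp (Complex.I * θ₁) ∧
    T + R = Complex.exp (Complex.I * (2 * θ₁ - Real.pi)) := by
  set c : ℂ := (Real.cos θ₁ : ℂ) with hc
  set s : ℂ := (Real.sin θ₁ : ℂ) with hs
  set z : ℂ := Complex.exp (Complex.I * θ₁) with hz
  set e : ℂ := Complex.exp (2 * Complex.I * ω * p) with he
  have hzcs : z = c + s * Complex.I := by
    rw [hz, mul_comm, Complex.exp_mul_I, hc, hs, Complex.ofReal_cos, Complex.ofReal_sin]
  have hcs : c ^ 2 + s ^ 2 = 1 := by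
    rw [hc, hs]
    exact_mod_cast (by linarith [Real.sin_sq_add_cos_sq θ₁] :
      Real.cos θ₁ ^ 2 + Real.sin θ₁ ^ 2 = 1)
  have hI : Complex.I ^ 2 = -1 := Complex.I_sq
  have hez : e * z ^ 2 = 1 := by
    rw [hp, hz, sq, ← Complex.exp_add, ← Complex.exp_add, ← Complex.exp_zero]
    congr 1
    ring
  have hs0 : s ≠ 0 := by
    rw [hs]
    simp only [ne_eq, Complex.ofReal_eq_zero]
    intro h
    rcases Real.sin_eq_zero_iff.mp h with ⟨n, hn⟩
    obtain ⟨h1, h2⟩ := hθ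
    have hpi := Real.pi_pos
    have hgt : (0:ℝ) < (n:ℝ) := by nlinarith
    have hlt : (n:ℝ) < 2 := by nlinarith
    have h1n : (0:ℤ) < n := by exact_mod_cast hgt
    have h2n : n < 2 := by exact_mod_cast hlt
    have hn1 : n = 1 := by omega
    exact hθπ (by rw [← hn, hn1]; push_cast; ring)
  have he0 : e ≠ 0 := Complex.exp_ne_zero _
  have h1cz : (1 : ℂ) - c * z ≠ 0 := by
    rw [hzcs]
    intro h
    have hmul : s * (s - c * Complex.I) = 0 := by linear_combination h + hcs
    rcases mul_eq_zero.mp hmul with h' | h'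
    · exact hs0 h'
    · have him := congrArg Complex.im h'
      simp [hs, hc] at him
      have hre := congrArg Complex.re h'
      simp [hs, hc] at hre
      exact hs0 (by rw [hs]; exact_mod_cast Complex.ofReal_eq_zero.mpr hre)
  have hden : e + R * e ≠ 0 := by
    rw [hR]
    intro h
    apply h1cz
    have hmul : e * (1 - c * z) = 0 := by linear_combination h
    rcases mul_eq_zero.mp hmul with h' | h'
    · exact absurd h' he0
    · exact h'
  have key : (1 : ℂ) - 2 * c * z = -z ^ 2 := by
    rw [hzcs]
    linear_combination -hcs + s ^ 2 * hI
  refine ⟨?_, ?_, ?_⟩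
  · rw [div_eq_iff hden, hR]
    have hez' : e * (c + s * Complex.I) ^ 2 = 1 := by rw [← hzcs]; exact hez
    rw [hzcs]
    linear_combination -hez' - e * hcs + s ^ 2 * e * hI
  · rw [hT, hR]; ring
  · rw [hT, hR]
    have hexp : Complex.exp (Complex.I * (2 * θ₁ - Real.pi)) = -z ^ 2 := by
      have harg : Complex.I * (2 * (θ₁ : ℂ) - Real.pi) =
          (Complex.I * θ₁ + Complex.I * θ₁) + Real.pi * Complex.I -
          (Real.pi * Complex.I + Real.pi * Complex.I) := by ring
      rw [harg, Complex.exp_sub, Complex.exp_add, Complex.exp_add, Complex.exp_add,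
        Complex.exp_pi_mul_I, ← hz]
      ring
    rw [hexp, ← key]
    ring
end

section
/- Let f : ℝ → ℝ be continuous, let p⋆ ∈ ℝ, s > 0, and suppose g : ℝ → ℝ is continuous with g(p⋆) = 0, g'(p⋆) ≠ 0 (g differentiable at p⋆ with nonzero derivative), g is π/ω-antiperiodic-free in the sense that g(p + nπ/ω) = g(p) for all n ∈ ℤ, and |f(p) - g(p)| ≤ C·e^{-c|p|} for all p ≤ p₀ with constants C, c > 0. Then for all sufficiently large n ∈ ℕ, f vanishes at some point of the interval [p⋆ - nπ/ω - s, p⋆ - nπ/ω + s]. -/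
lemma stmt_19_sign_aux {x y : ℝ} (h : |x - y| < |y|) : 0 < x * y := by
  rcases abs_lt.mp h with ⟨hl, hr⟩
  rcases lt_trichotomy y 0 with hy | hy | hy
  · rw [abs_of_neg hy] at hl hr
    exact mul_pos_of_neg_of_neg (by linarith) hy
  · exfalso; rw [hy, abs_zero] at h; exact absurd h (not_lt.mpr (abs_nonneg _))
  · rw [abs_of_pos hy] at hl hr
    exact mul_pos (by linarith) hy

theorem stmt_19 (ω : ℝ) (hω : 0 < ω) (f g : ℝ → ℝ) (hf : Continuous f) (hg : Continuous g)
    (pstar : ℝ) (s : ℝ) (hs : 0 < s)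
    (hgz : g pstar = 0) (d : ℝ) (hd : d ≠ 0) (hderiv : HasDerivAt g d pstar)
    (hper : ∀ (p : ℝ) (n : ℤ), g (p + n * Real.pi / ω) = g p)
    (C c p₀ : ℝ) (hC : 0 < C) (hc : 0 < c)
    (hclose : ∀ p ≤ p₀, |f p - g p| ≤ C * Real.exp (-c * |p|)) :
    ∃ N : ℕ, ∀ n : ℕ, N ≤ n →
      ∃ p ∈ Set.Icc (pstar - n * Real.pi / ω - s) (pstar - n * Real.pi / ω + s), f p = 0 := by
  have hπω : (0:ℝ) < Real.pi / ω := div_pos Real.pi_pos hω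
  -- slope facts near pstar
  have h1 := hasDerivAt_iff_tendsto_slope.mp hderiv
  have h2 : ∀ᶠ t in nhdsWithin pstar {pstar}ᶜ, |slope g pstar t - d| < |d| := by
    have : ∀ᶠ y in nhds d, |y - d| < |d| := eventually_abs_sub_lt d (abs_pos.mpr hd)
    exact h1.eventually this
  rw [eventually_nhdsWithin_iff, Metric.eventually_nhds_iff] at h2
  obtain ⟨δ, hδ, hδ2⟩ := h2
  obtain ⟨t0, ht0def⟩ : ∃ t0 : ℝ, t0 = min s (δ/2) := ⟨_, rfl⟩
  have ht0 : 0 < t0 := ht0def ▸ lt_min hs (by linarith)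
  have ht0s : t0 ≤ s := ht0def ▸ min_le_left _ _
  have ht0δ : t0 < δ := lt_of_le_of_lt (ht0def ▸ min_le_right s (δ/2)) (by linarith)
  obtain ⟨A0, hA0def⟩ : ∃ A0 : ℝ, A0 = pstar - t0 := ⟨_, rfl⟩
  obtain ⟨B0, hB0def⟩ : ∃ B0 : ℝ, B0 = pstar + t0 := ⟨_, rfl⟩
  have hA0mem : |slope g pstar A0 - d| < |d| := by
    apply hδ2
    · rw [Real.dist_eq, show A0 - pstar = -t0 by rw [hA0def]; ring, abs_neg, abs_of_pos ht0]
      exact ht0δ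
    · simp only [Set.mem_compl_iff, Set.mem_singleton_iff, hA0def]
      intro h; nlinarith [ht0]
  have hB0mem : |slope g pstar B0 - d| < |d| := by
    apply hδ2
    · rw [Real.dist_eq, show B0 - pstar = t0 by rw [hB0def]; ring, abs_of_pos ht0]
      exact ht0δ
    · simp only [Set.mem_compl_iff, Set.mem_singleton_iff, hB0def]
      intro h; nlinarith [ht0]
  obtain ⟨sA, hsAdef⟩ : ∃ sA : ℝ, sA = slope g pstar A0 := ⟨_, rfl⟩
  obtain ⟨sB, hsBdef⟩ : ∃ sB : ℝ, sB = slope g pstar B0 := ⟨_, rfl⟩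
  rw [← hsAdef] at hA0mem
  rw [← hsBdef] at hB0mem
  have hgA0 : g A0 = sA * (-t0) := by
    rw [hsAdef, slope_def_field, hgz, show A0 - pstar = -t0 by rw [hA0def]; ring]
    field_simp
    ring
  have hgB0 : g B0 = sB * t0 := by
    rw [hsBdef, slope_def_field, hgz, show B0 - pstar = t0 by rw [hB0def]; ring]
    field_simp
    ring
  have hdA : 0 < d * sA := by
    rcases abs_lt.mp hA0mem with ⟨hl, hr⟩
    rcases lt_or_gt_of_ne hd with h | h
    · rw [abs_of_neg h] at hl hr; nlinarith
    · rw [abs_of_pos h] at hl hr; nlinarith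
  have hdB : 0 < d * sB := by
    rcases abs_lt.mp hB0mem with ⟨hl, hr⟩
    rcases lt_or_gt_of_ne hd with h | h
    · rw [abs_of_neg h] at hl hr; nlinarith
    · rw [abs_of_pos h] at hl hr; nlinarith
  have hsAB : 0 < sA * sB := by nlinarith [mul_pos hdA hdB, sq_nonneg d]
  have hsign : g A0 * g B0 < 0 := by
    rw [hgA0, hgB0]; nlinarith [mul_pos hsAB (mul_pos ht0 ht0)]
  have hsA0 : sA ≠ 0 := by intro h0; rw [h0, mul_zero] at hdA; exact lt_irrefl 0 hdA
  have hsB0 : sB ≠ 0 := by intro h0; rw [h0, mul_zero] at hdB; exact lt_irrefl 0 hdB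
  obtain ⟨m, hmdef⟩ : ∃ m : ℝ, m = min |g A0| |g B0| := ⟨_, rfl⟩
  have hm : 0 < m := by
    rw [hmdef]
    apply lt_min <;> rw [abs_pos]
    · rw [hgA0]; exact mul_ne_zero hsA0 (neg_ne_zero.mpr ht0.ne')
    · rw [hgB0]; exact mul_ne_zero hsB0 ht0.ne'
  obtain ⟨T, hTdef⟩ : ∃ T : ℝ, T = min (min p₀ 0) (Real.log (m / C) / c - 1) := ⟨_, rfl⟩
  have hTp₀ : T ≤ p₀ := hTdef ▸ le_trans (min_le_left _ _) (min_le_left _ _)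
  have hT0 : T ≤ 0 := hTdef ▸ le_trans (min_le_left _ _) (min_le_right _ _)
  have hT : ∀ p ≤ T, C * Real.exp (c * p) < m := by
    intro p hp
    have hpT : p ≤ Real.log (m / C) / c - 1 := le_trans hp (hTdef ▸ min_le_right _ _)
    have h3 : c * p ≤ Real.log (m / C) - c := by
      have h4 := mul_le_mul_of_nonneg_left hpT hc.le
      rw [mul_sub, mul_one, mul_div_cancel₀ _ hc.ne'] at h4
      linarith
    calc C * Real.exp (c * p) ≤ C * Real.exp (Real.log (m / C) - c) :=
          mul_le_mul_of_nonneg_left (Real.exp_le_exp.mpr h3) hC.le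
      _ = m * Real.exp (-c) := by
          rw [Real.exp_sub, Real.exp_log (div_pos hm hC), Real.exp_neg]
          field_simp
      _ < m := by
          have he : Real.exp (-c) < 1 := Real.exp_lt_one_iff.mpr (by linarith)
          calc m * Real.exp (-c) < m * 1 := mul_lt_mul_of_pos_left he hm
            _ = m := mul_one m
  obtain ⟨N, hN⟩ := exists_nat_ge ((pstar + s - T) / (Real.pi / ω))
  refine ⟨N, fun n hn => ?_⟩
  have hnN : (pstar + s - T) / (Real.pi / ω) ≤ (n : ℝ) := le_trans hN (by exact_mod_cast hn)
  have hq : pstar + s - T ≤ (n : ℝ) * Real.pi / ω := by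
    rw [div_le_iff₀ hπω] at hnN
    calc pstar + s - T ≤ (n:ℝ) * (Real.pi / ω) := hnN
      _ = (n:ℝ) * Real.pi / ω := by ring
  obtain ⟨q, hqdef⟩ : ∃ q : ℝ, q = (n : ℝ) * Real.pi / ω := ⟨_, rfl⟩
  obtain ⟨A, hAdef⟩ : ∃ A : ℝ, A = A0 - q := ⟨_, rfl⟩
  obtain ⟨B, hBdef⟩ : ∃ B : ℝ, B = B0 - q := ⟨_, rfl⟩
  rw [← hqdef] at hq
  have hAB : A ≤ B := by rw [hAdef, hBdef, hA0def, hB0def]; linarith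
  have hBT : B ≤ T := by rw [hBdef, hB0def]; linarith
  have hAT : A ≤ T := le_trans hAB hBT
  have hgA : g A = g A0 := by
    have h7 := hper A0 (-(n:ℤ))
    have h8 : A0 + ((-(n:ℤ) : ℤ) : ℝ) * Real.pi / ω = A := by
      rw [hAdef, hqdef]; push_cast; ring
    rw [h8] at h7; exact h7
  have hgB : g B = g B0 := by
    have h7 := hper B0 (-(n:ℤ))
    have h8 : B0 + ((-(n:ℤ) : ℤ) : ℝ) * Real.pi / ω = B := by
      rw [hBdef, hqdef]; push_cast; ring
    rw [h8] at h7; exact h7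
  have hcloseA : |f A - g A0| < |g A0| := by
    have h5 := hclose A (le_trans hAT hTp₀)
    rw [hgA] at h5
    have h6 : -c * |A| = c * A := by rw [abs_of_nonpos (le_trans hAT hT0)]; ring
    rw [h6] at h5
    calc |f A - g A0| ≤ C * Real.exp (c * A) := h5
      _ < m := hT A hAT
      _ ≤ |g A0| := hmdef ▸ min_le_left _ _
  have hcloseB : |f B - g B0| < |g B0| := by
    have h5 := hclose B (le_trans hBT hTp₀)
    rw [hgB] at h5
    have h6 : -c * |B| = c * B := by rw [abs_of_nonpos (le_trans hBT hT0)]; ring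
    rw [h6] at h5
    calc |f B - g B0| ≤ C * Real.exp (c * B) := h5
      _ < m := hT B hBT
      _ ≤ |g B0| := hmdef ▸ min_le_right _ _
  have hfA : 0 < f A * g A0 := stmt_19_sign_aux hcloseA
  have hfB : 0 < f B * g B0 := stmt_19_sign_aux hcloseB
  have hfAB : f A * f B < 0 := by
    by_contra hcon
    push_neg at hcon
    have e1 : (f A * g A0) * (f B * g B0) = (f A * f B) * (g A0 * g B0) := by ring
    have e2 : (f A * f B) * (g A0 * g B0) ≤ 0 := mul_nonpos_of_nonneg_of_nonpos hcon hsign.le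
    linarith [mul_pos hfA hfB]
  have hsub : Set.Icc A B ⊆
      Set.Icc (pstar - (n:ℝ) * Real.pi / ω - s) (pstar - (n:ℝ) * Real.pi / ω + s) := by
    apply Set.Icc_subset_Icc
    · rw [hAdef, hA0def, hqdef]; linarith
    · rw [hBdef, hB0def, hqdef]; linarith
  rcases mul_neg_iff.mp hfAB with ⟨hpos, hneg⟩ | ⟨hneg, hpos⟩
  · obtain ⟨p, hp, hpz⟩ := intermediate_value_Icc' hAB hf.continuousOn ⟨hneg.le, hpos.le⟩
    exact ⟨p, hsub hp, hpz⟩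
  · obtain ⟨p, hp, hpz⟩ := intermediate_value_Icc hAB hf.continuousOn ⟨hneg.le, hpos.le⟩
    exact ⟨p, hsub hp, hpz⟩
end
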